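/- arXiv:math/0411610 — 6 statements merged into one kernel-verified Lean document; each statement's English description precedes it below -/
import Mathlib

section
/- Let d ≥ 3 and let h_0,...,h_d be nonnegative integers with h_0 = 1. Define f_{k} = Σ_{i=0}^{d} h_i * C(d-i, d-1-k) for k = 0,...,d-1. Then for all i < j with i + j ≤ d - 2, we have f_i < f_j. -/
private lemma step_lt {n k : ℕ} (hk : 2 * k + 2 ≤ n) : n.choose k < n.choose (k + 1) := by
  have hpos : 0 < n.choose k := Nat.choose_pos (by omega)
  have heq := Nat.choose_succ_right_eq n k
  have hlt : n.choose k * (k + 1) < n.choose (k + 1) * (k + 1) := by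
    rw [heq]
    have h1 : k + 1 < n - k := by omega
    exact mul_lt_mul_of_pos_left h1 hpos
  exact Nat.lt_of_mul_lt_mul_right hlt

private lemma step_le {n k : ℕ} (hk : 2 * k + 1 ≤ n) : n.choose k ≤ n.choose (k + 1) := by
  rcases Nat.lt_or_ge (2 * k + 1) n with hlt | hge
  · exact (step_lt (by omega)).le
  · have hn : n = 2 * k + 1 := by omega
    have hs : n.choose (n - (k+1)) = n.choose (k+1) := Nat.choose_symm (by omega)
    have : n - (k + 1) = k := by omega
    rw [this] at hs
    exact hs.le

private lemma choose_le_add (n k : ℕ) : ∀ a, a + (a + k) ≤ n → n.choose a ≤ n.choose (a + k) := by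
  induction k with
  | zero => intro a _; simp
  | succ k ih =>
    intro a hle
    have h1 : n.choose a ≤ n.choose (a + 1) := step_le (by omega)
    by_cases hc : (a + 1) + ((a + 1) + k) ≤ n
    · have h2 := ih (a + 1) hc
      have : a + 1 + k = a + (k + 1) := by omega
      rw [this] at h2
      exact h1.trans h2
    · have hb : a + (k + 1) = n - a := by omega
      rw [hb]
      exact le_of_eq (Nat.choose_symm (by omega : a ≤ n)).symm

private lemma choose_le' {n a b : ℕ} (hab : a ≤ b) (hs : a + b ≤ n) :
    n.choose a ≤ n.choose b := by
  have hb : b = a + (b - a) := by omega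
  rw [hb]
  exact choose_le_add n (b - a) a (by omega)

private lemma choose_lt' {n a b : ℕ} (hab : a < b) (hs : a + b < n) :
    n.choose a < n.choose b := by
  have h1 : n.choose a < n.choose (a + 1) := step_lt (by omega)
  exact h1.trans_le (choose_le' (by omega) (by omega))

private lemma choose_dec {n a b : ℕ} (hab : a ≤ b) (hs : n ≤ a + b) :
    n.choose b ≤ n.choose a := by
  by_cases hbn : b ≤ n
  · rw [← Nat.choose_symm hbn]
    exact choose_le' (by omega) (by omega)
  · rw [Nat.choose_eq_zero_of_lt (by omega)]
    exact Nat.zero_le _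

private lemma choose_dec_lt {n a b : ℕ} (hab : a < b) (hbn : b ≤ n) (hs : n < a + b) :
    n.choose b < n.choose a := by
  rw [← Nat.choose_symm hbn]
  exact choose_lt' (by omega) (by omega)

theorem stmt0 (d : ℕ) (hd : 3 ≤ d) (h : ℕ → ℕ) (h0 : h 0 = 1) (h1 : 1 ≤ h 1)
    (f : ℕ → ℕ)
    (hf : ∀ k, f k = ∑ i ∈ Finset.range (d + 1), h i * Nat.choose (d - i) (d - 1 - k)) :
    ∀ i j, i < j → i + j ≤ d - 2 → f i < f j := by
  intro i j hij hsum
  have hj : j ≤ d - 2 := by omega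
  rw [hf i, hf j]
  apply Finset.sum_lt_sum
  · intro t _
    apply Nat.mul_le_mul_left
    exact choose_dec (by omega) (by omega)
  · refine ⟨1, Finset.mem_range.mpr (by omega), ?_⟩
    have hlt : (d - 1).choose (d - 1 - i) < (d - 1).choose (d - 1 - j) :=
      choose_dec_lt (by omega) (by omega) (by omega)
    exact mul_lt_mul_of_pos_left hlt (by omega)
end

section
/- For d ≥ 3 and 0 ≤ i ≤ ⌊d/2⌋ with 2i ≠ d, the sequence b̃^i = (b̃_0,...,b̃_{d-1}) with b̃_k = C(i, d-1-k) + C(d-i, d-1-k) is unimodal with a peak at index d - 1 - ⌊(d-i)/2⌋. -/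
private def gg (n j : ℕ) : ℤ := (n.choose (j+1) : ℤ) - n.choose j

private lemma ggPascal (n k : ℕ) : gg (n+1) (k+1) = gg n (k+1) + gg n k := by
  simp only [gg, Nat.choose_succ_succ]
  push_cast
  ring

private lemma chooseInc {n j : ℕ} (h : 2*j+1 ≤ n) : n.choose j ≤ n.choose (j+1) := by
  rcases Nat.lt_or_ge (2*j+1) n with h' | h'
  · exact Nat.choose_le_succ_of_lt_half_left (by omega)
  · have hn : n = 2*j+1 := by omega
    subst hn
    rw [Nat.choose_symm_half]

private lemma ggnonneg {n j : ℕ} (h : 2*j+1 ≤ n) : 0 ≤ gg n j := by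
  have := chooseInc h
  simp only [gg, sub_nonneg]
  exact_mod_cast this

private lemma chooseDec {n j : ℕ} (h : n ≤ 2*j+1) : n.choose (j+1) ≤ n.choose j := by
  rcases Nat.lt_or_ge j n with hj | hj
  · -- j < n, use symmetry
    have h1 : n.choose (j+1) = n.choose (n - (j+1)) := (Nat.choose_symm (by omega)).symm
    have h2 : n.choose j = n.choose (n - j) := (Nat.choose_symm (by omega)).symm
    rw [h1, h2]
    rcases Nat.eq_or_lt_of_le (Nat.succ_le_of_lt hj) with he | hlt
    · simp [← he]
    · have hs : n - j = (n - (j+1)) + 1 := by omega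
      rw [hs]
      exact chooseInc (by omega)
  · have : n < j + 1 := by omega
    simp [Nat.choose_eq_zero_of_lt this]

private lemma ggnonpos {n j : ℕ} (h : n ≤ 2*j+1) : gg n j ≤ 0 := by
  have := chooseDec h
  simp only [gg, sub_nonpos]
  exact_mod_cast this

private lemma maxdropAux : ∀ t m j : ℕ, m + t = 2*j → gg (2*j) j ≤ gg m j := by
  intro t
  induction t with
  | zero =>
    intro m j h
    have : m = 2*j := by omega
    rw [this]
  | succ t ih =>
    intro m j h
    obtain ⟨k, rfl⟩ : ∃ k, j = k + 1 := ⟨j - 1, by omega⟩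
    have h1 : gg (m+1) (k+1) = gg m (k+1) + gg m k := ggPascal m k
    have h2 : gg m k ≤ 0 := ggnonpos (by omega)
    have h3 : gg (2*(k+1)) (k+1) ≤ gg (m+1) (k+1) := ih (m+1) (k+1) (by omega)
    linarith

private lemma maxdrop (m j : ℕ) : gg (2*j) j ≤ gg m j := by
  rcases le_or_gt m (2*j) with h | h
  · exact maxdropAux (2*j - m) m j (by omega)
  · have h1 : 0 ≤ gg m j := ggnonneg (by omega)
    have h2 : gg (2*j) j ≤ 0 := ggnonpos (by omega)
    linarith

private lemma ggsymm (j : ℕ) : gg (2*j+1) j = 0 := by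
  simp [gg, Nat.choose_symm_half]

private lemma catstep (j : ℕ) : 0 ≤ gg (2*j) j + gg (2*j+2) j := by
  rcases Nat.eq_zero_or_pos j with rfl | hj
  · norm_num [gg]
  · obtain ⟨k, rfl⟩ : ∃ k, j = k + 1 := ⟨j - 1, by omega⟩
    -- gg (2j+1) j = gg (2j) j + gg (2j) k
    have p1 : gg (2*(k+1)+1) (k+1) = gg (2*(k+1)) (k+1) + gg (2*(k+1)) k := by
      have := ggPascal (2*(k+1)) k
      convert this using 2
    have s1 : gg (2*(k+1)+1) (k+1) = 0 := ggsymm (k+1)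
    -- gg (2j+2) j = gg (2j+1) j + gg (2j+1) k = gg (2j+1) k
    have p2 : gg (2*(k+1)+2) (k+1) = gg (2*(k+1)+1) (k+1) + gg (2*(k+1)+1) k := by
      have := ggPascal (2*(k+1)+1) k
      convert this using 2
    -- gg (2j+1) k ≥ gg (2j) k
    have p3 : gg (2*(k+1)) k ≤ gg (2*(k+1)+1) k := by
      rcases Nat.eq_zero_or_pos k with rfl | hk
      · norm_num [gg]
      · obtain ⟨u, rfl⟩ : ∃ u, k = u + 1 := ⟨k - 1, by omega⟩
        have := ggPascal (2*(u+2)) u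
        have hnn : 0 ≤ gg (2*(u+2)) u := ggnonneg (by omega)
        have he : (2*(u+2)+1) = 2*(u+2)+1 := rfl
        nlinarith [ggPascal (2*(u+1+1)) u]
    linarith

private lemma mainlem : ∀ n m j : ℕ, m < n → 2*(j+1) ≤ n → 0 ≤ gg m j + gg n j := by
  intro n
  induction n using Nat.strong_induction_on with
  | _ n ih =>
    intro m j hm hn
    rcases Nat.eq_zero_or_pos j with rfl | hj
    · have h1 : gg m 0 = (m : ℤ) - 1 := by simp [gg]
      have h2 : gg n 0 = (n : ℤ) - 1 := by simp [gg]
      rw [h1, h2]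
      have : (2:ℕ) ≤ n := by omega
      omega
    · obtain ⟨k, rfl⟩ : ∃ k, j = k + 1 := ⟨j - 1, by omega⟩
      rcases Nat.eq_or_lt_of_le hn with hb | hb
      · -- boundary case n = 2*(k+2)
        have h1 := maxdrop m (k+1)
        have h2 := catstep (k+1)
        rw [← hb]
        have : 2*(k+1+1) = 2*(k+1)+2 := by omega
        rw [this]
        linarith
      · -- n ≥ 2*(k+2)+1
        obtain ⟨p, rfl⟩ : ∃ p, n = p + 1 := ⟨n - 1, by omega⟩
        have hp : gg (p+1) (k+1) = gg p (k+1) + gg p k := ggPascal p k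
        have hk : 0 ≤ gg p k := ggnonneg (by omega)
        rcases Nat.lt_or_ge m p with hmp | hmp
        · have := ih p (by omega) m (k+1) hmp (by omega)
          linarith
        · have hmeq : m = p := by omega
          subst hmeq
          have : 0 ≤ gg m (k+1) := ggnonneg (by omega)
          linarith

theorem stmt2 (d : ℕ) (hd : 3 ≤ d) (i : ℕ) (hi : i ≤ d / 2) (hne : 2 * i ≠ d)
    (b : ℕ → ℕ)
    (hb : ∀ k, b k = Nat.choose i (d - 1 - k) + Nat.choose (d - i) (d - 1 - k)) :
    (∀ k, k + 1 ≤ d - 1 - (d - i) / 2 → b k ≤ b (k + 1)) ∧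
    (∀ k, d - 1 - (d - i) / 2 ≤ k → k + 1 ≤ d - 1 → b (k + 1) ≤ b k) := by
  have him : i < d - i := by omega
  constructor
  · intro k hk
    rw [hb, hb]
    obtain ⟨t, ht1, ht2⟩ : ∃ t, d - 1 - k = t + 1 ∧ d - 1 - (k+1) = t := ⟨d - 2 - k, by omega⟩
    rw [ht1, ht2]
    have hJ : (d - i) / 2 + 1 ≤ t + 1 := by omega
    have h1 : i.choose (t+1) ≤ i.choose t := chooseDec (by omega)
    have h2 : (d-i).choose (t+1) ≤ (d-i).choose t := chooseDec (by omega)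
    omega
  · intro k hk1 hk2
    rw [hb, hb]
    obtain ⟨t, ht1, ht2⟩ : ∃ t, d - 1 - k = t + 1 ∧ d - 1 - (k+1) = t := ⟨d - 2 - k, by omega⟩
    rw [ht1, ht2]
    have hJ : t + 1 ≤ (d - i) / 2 := by omega
    have := mainlem (d - i) i t him (by omega)
    simp only [gg] at this
    have : (i.choose t : ℤ) + (d-i).choose t ≤ (i.choose (t+1) : ℤ) + (d-i).choose (t+1) := by
      linarith
    exact_mod_cast this
end

section
/- Let d ≥ 3 and let h_0,...,h_d be nonnegative integers satisfying h_i ≥ h_{d-i} for all 0 ≤ i ≤ ⌊d/2⌋, with h_d = 0. Define f_k = Σ_{i=0}^{d} h_i * C(d-i, d-1-k) for k = 0,...,d-1. Then f_{⌊3(d-1)/4⌋} ≥ f_{⌊3(d-1)/4⌋+1} ≥ ... ≥ f_{d-1}. -/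
open Finset

private def Ez (j n : ℕ) : ℤ := (n.choose (j+1) : ℤ) - n.choose j

private lemma Epos (j n : ℕ) (hn : 2*j+1 ≤ n) : 0 ≤ Ez j n := by
  unfold Ez
  rcases eq_or_lt_of_le hn with h' | h'
  · have hs := Nat.choose_symm (show j+1 ≤ n by omega)
    have he : n - (j+1) = j := by omega
    rw [he] at hs
    rw [hs]
    simp
  · have := Nat.choose_le_succ_of_lt_half_left (show j < n/2 by omega)
    have : (n.choose j : ℤ) ≤ n.choose (j+1) := by exact_mod_cast this
    linarith

private lemma Eneg (j n : ℕ) (hn : n ≤ 2*j+1) : Ez j n ≤ 0 := by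
  unfold Ez
  rcases le_or_gt n j with hle | hlt
  · rw [Nat.choose_eq_zero_of_lt (by omega)]
    simp
  · have h1 : n.choose (j+1) = n.choose (n-(j+1)) := (Nat.choose_symm (by omega)).symm
    have h2 : n.choose j = n.choose (n-j) := (Nat.choose_symm (by omega)).symm
    have h3 : n - j = (n - (j+1)) + 1 := by omega
    have h4 := Epos (n-(j+1)) n (by omega)
    unfold Ez at h4
    rw [h1, h2, h3]
    linarith

private lemma Ezero (j : ℕ) : Ez j (2*j+1) = 0 := by
  unfold Ez
  have hs := Nat.choose_symm (show j+1 ≤ 2*j+1 by omega)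
  have he : 2*j+1 - (j+1) = j := by omega
  rw [he] at hs
  rw [hs]
  ring

private lemma Epascal (j x : ℕ) : Ez (j+1) (x+1) = Ez (j+1) x + Ez j x := by
  unfold Ez
  rw [Nat.choose_succ_succ x (j+1), Nat.choose_succ_succ x j]
  push_cast
  ring

private lemma Emono (j x : ℕ) (hx : 2*j ≤ x+1) : Ez j x ≤ Ez j (x+1) := by
  cases j with
  | zero =>
    unfold Ez
    simp only [zero_add, Nat.choose_one_right, Nat.choose_zero_right]
    push_cast
    omega
  | succ j' =>
    rw [Epascal]
    have := Epos j' x (by omega)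
    linarith

private lemma Emono' (j a b : ℕ) (hab : a ≤ b) (ha : 2*j ≤ a+1) : Ez j a ≤ Ez j b := by
  induction b, hab using Nat.le_induction with
  | base => exact le_refl _
  | succ b hb ih => exact ih.trans (Emono j b (by omega))

private lemma Bs (j : ℕ) : ∀ s m : ℕ, m + s = 2*j+3 → 0 ≤ Ez (j+1) (m + 2*s) + Ez (j+1) m := by
  intro s
  induction s with
  | zero =>
    intro m hm
    have hm' : m = 2*(j+1)+1 := by omega
    subst hm'
    simp [Ezero (j+1)]
  | succ s ih =>
    intro m hm
    have IH := ih (m+1) (by omega)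
    have e1 : Ez (j+1) (m + 2*(s+1)) = Ez (j+1) (m+1+2*s) + Ez j (m+1+2*s) := by
      have hp := Epascal j (m+1+2*s)
      have : m + 2*(s+1) = (m+1+2*s)+1 := by omega
      rw [this, hp]
    have e2 : Ez (j+1) (m+1) = Ez (j+1) m + Ez j m := Epascal j m
    have key : Ez j m ≤ Ez j (m+1+2*s) := by
      rcases Nat.eq_zero_or_pos s with hs | hs
      · subst hs
        simpa using Emono j m (by omega)
      · have hneg := Eneg j m (by omega)
        have hpos := Epos j (m+1+2*s) (by omega)
        linarith
    linarith

private lemma Bpair (j n m : ℕ) (hmn : m ≤ n) (hsum : 4*j+2 ≤ n+m) : 0 ≤ Ez j n + Ez j m := by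
  cases j with
  | zero =>
    unfold Ez
    simp only [zero_add, Nat.choose_one_right, Nat.choose_zero_right]
    push_cast
    omega
  | succ j' =>
    rcases le_or_gt (2*(j'+1)+1) m with hm | hm
    · have h1 := Epos (j'+1) m hm
      have h2 := Epos (j'+1) n (le_trans hm hmn)
      linarith
    · set s := 2*j'+3 - m with hs
      have hms : m + s = 2*j'+3 := by omega
      have h1 := Bs j' s m hms
      have h2 : Ez (j'+1) (m+2*s) ≤ Ez (j'+1) n := Emono' _ _ _ (by omega) (by omega)
      linarith

theorem stmt5 (d : ℕ) (hd : 3 ≤ d) (h : ℕ → ℕ)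
    (hsym : ∀ i, i ≤ d / 2 → h (d - i) ≤ h i) (hdz : h d = 0)
    (f : ℕ → ℕ)
    (hf : ∀ k, f k = ∑ i ∈ Finset.range (d + 1), h i * Nat.choose (d - i) (d - 1 - k)) :
    ∀ k, 3 * (d - 1) / 4 ≤ k → k + 1 ≤ d - 1 → f (k + 1) ≤ f k := by
  intro k hk1 hk2
  set J := d - 2 - k with hJ
  have hJ1 : d - 1 - k = J + 1 := by omega
  have hJ2 : d - 1 - (k+1) = J := by omega
  rw [hf, hf, hJ1, hJ2]
  have hJa : 4*J + 2 ≤ d := by omega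
  have hJb : 2*J + 1 ≤ d - d/2 := by omega
  have key : ∀ i ∈ Finset.range (d+1),
      0 ≤ (h (d - i) : ℤ) * Ez J (d - (d - i)) + (h i : ℤ) * Ez J (d - i) := by
    intro i hi
    rw [Finset.mem_range] at hi
    have hid : i ≤ d := by omega
    have hdd : d - (d - i) = i := by omega
    rw [hdd]
    rcases le_or_gt (2*i) d with hhalf | hhalf
    · have hsy := hsym i (by omega)
      have e1 : 0 ≤ Ez J (d - i) := Epos J (d-i) (by omega)
      have e2 := Bpair J (d-i) i (by omega) (by omega)
      have hc : (h (d-i) : ℤ) ≤ h i := by exact_mod_cast hsy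
      nlinarith [mul_nonneg (sub_nonneg.2 hc) e1,
        mul_nonneg (show (0:ℤ) ≤ h (d-i) from by positivity) e2]
    · have hsy := hsym (d - i) (by omega)
      rw [hdd] at hsy
      have e1 : 0 ≤ Ez J i := Epos J i (by omega)
      have e2 := Bpair J i (d-i) (by omega) (by omega)
      have hc : (h i : ℤ) ≤ h (d-i) := by exact_mod_cast hsy
      nlinarith [mul_nonneg (sub_nonneg.2 hc) e1,
        mul_nonneg (show (0:ℤ) ≤ h i from by positivity) e2]
  have hrefl : ∑ i ∈ Finset.range (d+1), (h (d-i):ℤ) * Ez J (d-(d-i))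
      = ∑ i ∈ Finset.range (d+1), (h i:ℤ) * Ez J (d-i) := by
    have := Finset.sum_range_reflect (fun i => (h i:ℤ) * Ez J (d-i)) (d+1)
    simpa using this
  have hsumkey : 0 ≤ ∑ i ∈ Finset.range (d+1),
      ((h (d-i):ℤ) * Ez J (d-(d-i)) + (h i:ℤ) * Ez J (d-i)) := Finset.sum_nonneg key
  rw [Finset.sum_add_distrib, hrefl] at hsumkey
  have h2 : 0 ≤ ∑ i ∈ Finset.range (d+1), (h i:ℤ) * Ez J (d-i) := by linarith
  have expand : ∑ i ∈ Finset.range (d+1), (h i:ℤ) * Ez J (d-i)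
      = (∑ i ∈ Finset.range (d+1), (h i:ℤ) * ((d-i).choose (J+1)))
        - ∑ i ∈ Finset.range (d+1), (h i:ℤ) * ((d-i).choose J) := by
    rw [← Finset.sum_sub_distrib]
    apply Finset.sum_congr rfl
    intro i _
    unfold Ez
    ring
  have hZ : (∑ i ∈ Finset.range (d+1), (h i:ℤ) * ((d-i).choose J))
      ≤ ∑ i ∈ Finset.range (d+1), (h i:ℤ) * ((d-i).choose (J+1)) := by
    rw [expand] at h2
    linarith
  exact_mod_cast hZ
end

section
/- Let d ≥ 3 and let h_0,...,h_d be nonnegative integers with h_0 = h_d = 1 and h_i = h_{d-i} for all i (Dehn–Sommerville symmetry). Define f_k = Σ_{i=0}^d h_i * C(d-i, d-1-k). Then f_{⌊3(d-1)/4⌋} > f_{⌊3(d-1)/4⌋+1} > ... > f_{d-1}. -/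
private lemma chooseA (n j : ℕ) (hn : 2 * (j + 1) ≤ n + 1) :
    Nat.choose n j ≤ Nat.choose n (j + 1) := by
  have key : Nat.choose n (j + 1) * (j + 1) = Nat.choose n j * (n - j) :=
    Nat.choose_succ_right_eq n j
  have h1 : Nat.choose n j * (j + 1) ≤ Nat.choose n (j + 1) * (j + 1) := by
    rw [key]
    exact Nat.mul_le_mul_left _ (by omega)
  exact Nat.le_of_mul_le_mul_right h1 (by omega)

private lemma chooseA' (n j : ℕ) (hn : 2 * (j + 1) ≤ n) :
    Nat.choose n j < Nat.choose n (j + 1) := by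
  have key : Nat.choose n (j + 1) * (j + 1) = Nat.choose n j * (n - j) :=
    Nat.choose_succ_right_eq n j
  have hpos : 0 < Nat.choose n j := Nat.choose_pos (by omega)
  have h1 : Nat.choose n j * (j + 1) < Nat.choose n (j + 1) * (j + 1) := by
    rw [key]
    have hlt : j + 1 < n - j := by omega
    exact Nat.mul_lt_mul_of_pos_left hlt hpos
  exact Nat.lt_of_mul_lt_mul_right h1

private lemma pairAux (a b j : ℕ) (hab2 : a ≤ b) (hab : 4 * (j + 1) ≤ a + b + 2) :
    Nat.choose a j + Nat.choose b j ≤ Nat.choose a (j + 1) + Nat.choose b (j + 1) := by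
  by_cases hca : 2 * (j + 1) ≤ a + 1
  · exact add_le_add (chooseA a j hca) (chooseA b j (by omega))
  · have ha2j : a ≤ 2 * j := by omega
    have hb : 2 * j + 2 ≤ b := by omega
    by_cases haj : a < j
    · rw [Nat.choose_eq_zero_of_lt haj, Nat.choose_eq_zero_of_lt (by omega : a < j + 1)]
      simpa using chooseA b j (by omega)
    · push_neg at haj
      have key1 : Nat.choose a (j + 1) * (j + 1) = Nat.choose a j * (a - j) :=
        Nat.choose_succ_right_eq a j
      have key2 : Nat.choose b (j + 1) * (j + 1) = Nat.choose b j * (b - j) :=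
        Nat.choose_succ_right_eq b j
      have hpq : Nat.choose a j ≤ Nat.choose b j := Nat.choose_le_choose j hab2
      set p := Nat.choose a j with hp
      set q := Nat.choose b j with hq
      have hmul : p * (j + 1) + q * (j + 1) ≤
          (Nat.choose a (j + 1) + Nat.choose b (j + 1)) * (j + 1) := by
        rw [add_mul, key1, key2]
        set x := a - j with hx
        set z := 2 * j + 1 - a with hz
        set y := b - j with hy
        have hxz : x + z = j + 1 := by omega
        have hyz : (j + 1) + z ≤ y := by omega
        calc p * (j + 1) + q * (j + 1) = p * x + (p * z + q * (j + 1)) := by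
              rw [← hxz]; ring
          _ ≤ p * x + (q * z + q * (j + 1)) := by
              exact add_le_add_right (add_le_add_left (Nat.mul_le_mul_right z hpq) _) _
          _ = p * x + q * (z + (j + 1)) := by ring
          _ ≤ p * x + q * y := by
              exact add_le_add_right (Nat.mul_le_mul_left q (by omega)) _
      have hmul' : (p + q) * (j + 1) ≤
          (Nat.choose a (j + 1) + Nat.choose b (j + 1)) * (j + 1) := by
        rw [add_mul]; exact hmul
      exact Nat.le_of_mul_le_mul_right hmul' (by omega)

private lemma pairLem (a b j : ℕ) (hab : 4 * (j + 1) ≤ a + b + 2) :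
    Nat.choose a j + Nat.choose b j ≤ Nat.choose a (j + 1) + Nat.choose b (j + 1) := by
  rcases le_total a b with hle | hle
  · exact pairAux a b j hle hab
  · have := pairAux b a j hle (by omega)
    omega

theorem stmt6 (d : ℕ) (hd : 3 ≤ d) (h : ℕ → ℕ) (h0 : h 0 = 1) (hdd : h d = 1)
    (hsym : ∀ i, i ≤ d → h i = h (d - i))
    (f : ℕ → ℕ)
    (hf : ∀ k, f k = ∑ i ∈ Finset.range (d + 1), h i * Nat.choose (d - i) (d - 1 - k)) :
    ∀ k, 3 * (d - 1) / 4 ≤ k → k + 1 ≤ d - 1 → f (k + 1) < f k := by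
  intro k hk hk1
  set m := d - 2 - k with hm
  have hmd : 4 * (m + 1) ≤ d + 2 := by omega
  have hd1k : d - 1 - k = m + 1 := by omega
  have hd1k1 : d - 1 - (k + 1) = m := by omega
  -- S : the sums
  set S : ℕ → ℕ := fun n => ∑ i ∈ Finset.range (d + 1), h i * Nat.choose (d - i) n with hS
  have hfk : f k = S (m + 1) := by rw [hf, hd1k]
  have hfk1 : f (k + 1) = S m := by rw [hf, hd1k1]
  -- reflection
  have hST : ∀ n, S n = ∑ i ∈ Finset.range (d + 1), h i * Nat.choose i n := by
    intro n
    have := Finset.sum_range_reflect (fun i => h i * Nat.choose (d - i) n) (d + 1)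
    rw [hS]
    simp only at this ⊢
    rw [← this]
    apply Finset.sum_congr rfl
    intro i hi
    have hi' : i ≤ d := by
      have := Finset.mem_range.mp hi; omega
    have e1 : d + 1 - 1 - i = d - i := by omega
    have e2 : d - (d - i) = i := by omega
    rw [e1, e2, ← hsym i hi']
  -- doubled sums
  have hdouble : ∀ n, S n + S n = ∑ i ∈ Finset.range (d + 1),
      h i * (Nat.choose (d - i) n + Nat.choose i n) := by
    intro n
    nth_rewrite 1 [hST n]
    rw [hS]
    simp only
    rw [← Finset.sum_add_distrib]
    apply Finset.sum_congr rfl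
    intro i _
    ring
  have hkey : S m + S m < S (m + 1) + S (m + 1) := by
    rw [hdouble, hdouble]
    apply Finset.sum_lt_sum
    · intro i hi
      have hi' : i ≤ d := by
        have := Finset.mem_range.mp hi; omega
      apply Nat.mul_le_mul_left
      have := pairLem (d - i) i m (by omega)
      omega
    · refine ⟨0, Finset.mem_range.mpr (by omega), ?_⟩
      rw [h0]
      simp only [Nat.sub_zero, one_mul]
      have hz : Nat.choose 0 (m + 1) = 0 := Nat.choose_eq_zero_of_lt (by omega)
      rcases Nat.eq_zero_or_pos m with hm0 | hm1
      · simp only [hm0, Nat.choose_zero_right, Nat.choose_self, zero_add,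
          Nat.choose_one_right]
        have hz1 : Nat.choose 0 1 = 0 := Nat.choose_eq_zero_of_lt (by omega)
        omega
      · have h0m : Nat.choose 0 m = 0 := Nat.choose_eq_zero_of_lt (by omega)
        have := chooseA' d m (by omega)
        omega
  rw [hfk, hfk1]
  omega
end

section
/- Let d ≥ 3 and let h_0,...,h_d be nonnegative integers with h_0 = 1 and h_i ≥ h_{d-i} for 0 ≤ i ≤ ⌊d/2⌋. Define f_k = Σ_{i=0}^d h_i C(d-i, d-1-k). Then f_0 < f_1 < ... < f_{⌊(d-1)/2⌋}, provided h_1 ≥ 1. -/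
lemma aux_choose_lt (n k : ℕ) (hn : 2 * k + 2 ≤ n) :
    Nat.choose n k < Nat.choose n (k + 1) := by
  have e := Nat.choose_succ_right_eq n k
  have pos : 0 < Nat.choose n k := Nat.choose_pos (by omega)
  have h2 : k + 2 ≤ n - k := by omega
  have : Nat.choose n k * (k + 1) < Nat.choose n (k + 1) * (k + 1) := by
    calc Nat.choose n k * (k + 1) < Nat.choose n k * (k + 2) := by
          exact Nat.mul_lt_mul_of_le_of_lt (le_refl _) (by omega) pos
      _ ≤ Nat.choose n k * (n - k) := Nat.mul_le_mul_left _ h2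
      _ = Nat.choose n (k + 1) * (k + 1) := e.symm
  exact Nat.lt_of_mul_lt_mul_right this

lemma aux_choose_succ_le (n s : ℕ) (hn : n ≤ 2 * s + 1) :
    Nat.choose n (s + 1) ≤ Nat.choose n s := by
  by_cases hns : n < s + 1
  · rw [Nat.choose_eq_zero_of_lt hns]; exact Nat.zero_le _
  · push_neg at hns
    have h1 : Nat.choose n (s + 1) = Nat.choose n (n - (s + 1)) :=
      (Nat.choose_symm hns).symm
    by_cases hb : n = 2 * s + 1
    · subst hb
      rw [h1]
      have : 2 * s + 1 - (s + 1) = s := by omega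
      rw [this]
    · have h2 : Nat.choose n s = Nat.choose n (n - s) :=
        (Nat.choose_symm (by omega : s ≤ n)).symm
      rw [h1, h2]
      have h3 : n - s = (n - (s + 1)) + 1 := by omega
      rw [h3]
      exact Nat.choose_le_succ_of_lt_half_left (by omega)

theorem stmt10 (d : ℕ) (hd : 3 ≤ d) (h : ℕ → ℕ) (h0 : h 0 = 1) (h1 : 1 ≤ h 1)
    (hsym : ∀ i, i ≤ d / 2 → h (d - i) ≤ h i)
    (f : ℕ → ℕ)
    (hf : ∀ k, f k = ∑ i ∈ Finset.range (d + 1), h i * Nat.choose (d - i) (d - 1 - k)) :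
    ∀ k, k + 1 ≤ (d - 1) / 2 → f k < f (k + 1) := by
  intro k hk
  have hdk : 2 * k + 3 ≤ d := by omega
  rw [hf k, hf (k + 1)]
  apply Finset.sum_lt_sum
  · intro i _
    apply Nat.mul_le_mul_left
    have heq : d - 1 - k = (d - 1 - (k + 1)) + 1 := by omega
    rw [heq]
    exact aux_choose_succ_le _ _ (by omega)
  · refine ⟨1, Finset.mem_range.mpr (by omega), ?_⟩
    have e1 : Nat.choose (d - 1) (d - 1 - k) = Nat.choose (d - 1) k :=
      Nat.choose_symm (by omega)
    have e2 : Nat.choose (d - 1) (d - 1 - (k + 1)) = Nat.choose (d - 1) (k + 1) :=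
      Nat.choose_symm (by omega)
    rw [e1, e2]
    exact Nat.mul_lt_mul_of_le_of_lt (le_refl _) (aux_choose_lt _ _ (by omega)) (by omega)
end

section
/- Let d ≥ 3 and let (h_0,...,h_d) be nonnegative integers with h_0 = 1, h_1 ≥ 1, and h_i ≥ h_{d-i} for all 0 ≤ i ≤ ⌊d/2⌋. Define f_k = Σ_{i=0}^d h_i C(d-i, d-1-k) for 0 ≤ k ≤ d-1. Then f_0 < f_1 < ... < f_{⌊(d-1)/2⌋} and f_{⌊3(d-1)/4⌋} ≥ f_{⌊3(d-1)/4⌋+1} ≥ ... ≥ f_{d-1}. -/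
open Finset

private lemma cmono1 {n r : ℕ} (hr : 2*r+1 ≤ n) : n.choose r ≤ n.choose (r+1) := by
  have key : n.choose (r+1) * (r+1) = n.choose r * (n - r) := Nat.choose_succ_right_eq n r
  have h2 : n.choose r * (r+1) ≤ n.choose (r+1) * (r+1) := by
    rw [key]; exact Nat.mul_le_mul_left _ (by omega)
  exact Nat.le_of_mul_le_mul_right h2 (by omega)

private lemma cmono2 {n r : ℕ} (hr : 2*r+2 ≤ n) : n.choose r < n.choose (r+1) := by
  have key : n.choose (r+1) * (r+1) = n.choose r * (n - r) := Nat.choose_succ_right_eq n r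
  have hpos : 0 < n.choose r := Nat.choose_pos (by omega)
  have h2 : n.choose r * (r+1) < n.choose (r+1) * (r+1) := by
    rw [key]
    calc n.choose r * (r+1) < n.choose r * (r+2) := by
          exact mul_lt_mul_of_pos_left (by omega) hpos
      _ ≤ n.choose r * (n - r) := Nat.mul_le_mul_left _ (by omega)
  exact Nat.lt_of_mul_lt_mul_right h2

private lemma cmir1 {n j : ℕ} (hn : n ≤ 2*j+1) : n.choose (j+1) ≤ n.choose j := by
  rcases lt_or_ge n (j+1) with hc | hc
  · rw [Nat.choose_eq_zero_of_lt hc]; exact Nat.zero_le _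
  · have e1 : n.choose (j+1) = n.choose (n - (j+1)) := (Nat.choose_symm hc).symm
    have e2 : n.choose j = n.choose (n - j) := (Nat.choose_symm (by omega)).symm
    have e3 : n - j = (n - (j+1)) + 1 := by omega
    rw [e1, e2, e3]
    exact cmono1 (by omega)

private lemma cmir2 {n j : ℕ} (hc : j+1 ≤ n) (hn : n ≤ 2*j) : n.choose (j+1) < n.choose j := by
  have e1 : n.choose (j+1) = n.choose (n - (j+1)) := (Nat.choose_symm hc).symm
  have e2 : n.choose j = n.choose (n - j) := (Nat.choose_symm (by omega)).symm
  have e3 : n - j = (n - (j+1)) + 1 := by omega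
  rw [e1, e2, e3]
  exact cmono2 (by omega)

private lemma ident (N j : ℕ) (hj : 1 ≤ j) :
    ((N:ℤ)+1) * ((N.choose j : ℤ) - N.choose (j-1)) = ((N:ℤ)+1-2*j) * ((N+1).choose j) := by
  obtain ⟨J, rfl⟩ : ∃ J, j = J+1 := ⟨j-1, by omega⟩
  have c1 : ((N:ℤ)+1) * (N.choose J : ℤ) = ((N+1).choose (J+1) : ℤ) * ((J:ℤ)+1) := by
    exact_mod_cast congrArg (Nat.cast (R := ℤ)) (Nat.add_one_mul_choose_eq N J)
  have c2 : (((N+1).choose (J+1) : ℕ) : ℤ) = (N.choose J : ℤ) + (N.choose (J+1) : ℤ) := by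
    exact_mod_cast congrArg (Nat.cast (R := ℤ)) (Nat.choose_succ_succ N J)
  simp only [Nat.add_sub_cancel]
  push_cast
  linear_combination (-(N:ℤ)-1) * c2 - 2 * c1

private lemma keyD (n i j : ℕ) (hin : i ≤ n) (hj : 1 ≤ j) (h4 : 4*j ≤ n + i + 2)
    (hc : i + 2 ≤ 2*j) :
    0 ≤ ((n.choose j : ℤ) - n.choose (j-1)) + ((i.choose j : ℤ) - i.choose (j-1)) := by
  have I1 := ident n j hj
  have I2 := ident i j hj
  have n1 : (n+1) * n.choose (j-1) = (n+1).choose j * j := by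
    have := Nat.add_one_mul_choose_eq n (j-1)
    rwa [show j - 1 + 1 = j from by omega] at this
  have n2 : (i+1) * i.choose (j-1) = (i+1).choose j * j := by
    have := Nat.add_one_mul_choose_eq i (j-1)
    rwa [show j - 1 + 1 = j from by omega] at this
  have c1 : ((n:ℤ)+1) * (n.choose (j-1) : ℤ) = ((n+1).choose j : ℤ) * j := by exact_mod_cast n1
  have c2 : ((i:ℤ)+1) * (i.choose (j-1) : ℤ) = ((i+1).choose j : ℤ) * j := by exact_mod_cast n2
  have cm : (i.choose (j-1) : ℤ) ≤ (n.choose (j-1) : ℤ) := by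
    exact_mod_cast Nat.choose_mono (j-1) hin
  have step1 : (j:ℤ) * ( ((i:ℤ)+1) * ((n+1).choose j : ℤ) - ((n:ℤ)+1) * ((i+1).choose j : ℤ) )
      = (((i:ℤ)+1) * ((n:ℤ)+1)) * ((n.choose (j-1) : ℤ) - (i.choose (j-1) : ℤ)) := by
    linear_combination ((n:ℤ)+1) * c2 - ((i:ℤ)+1) * c1
  have step2 : (0:ℤ) ≤ (j:ℤ) * ( ((i:ℤ)+1) * ((n+1).choose j : ℤ) - ((n:ℤ)+1) * ((i+1).choose j : ℤ) ) := by
    rw [step1]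
    exact mul_nonneg (by positivity) (sub_nonneg.mpr cm)
  have hjp : (0:ℤ) < (j:ℤ) := by exact_mod_cast hj
  have step3 : (0:ℤ) ≤ ((i:ℤ)+1) * ((n+1).choose j : ℤ) - ((n:ℤ)+1) * ((i+1).choose j : ℤ) :=
    (mul_nonneg_iff_of_pos_left hjp).mp step2
  have hB : (0:ℤ) ≤ ((n+1).choose j : ℤ) := by positivity
  have hA : (0:ℤ) ≤ ((i+1).choose j : ℤ) := by positivity
  have e : (((i:ℤ)+1) * ((n:ℤ)+1)) * ( ((n.choose j : ℤ) - n.choose (j-1)) + ((i.choose j : ℤ) - i.choose (j-1)) )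
      = ((i:ℤ)+1) * ( (((n:ℤ)+1) - 2*j) * ((n+1).choose j : ℤ) )
        + ((n:ℤ)+1) * ( (((i:ℤ)+1) - 2*j) * ((i+1).choose j : ℤ) ) := by
    linear_combination ((i:ℤ)+1) * I1 + ((n:ℤ)+1) * I2
  have h2ja : (1:ℤ) ≤ 2*(j:ℤ) - ((i:ℤ)+1) := by
    have : (i:ℤ) + 2 ≤ 2*(j:ℤ) := by exact_mod_cast hc
    linarith
  have hba : 2*(j:ℤ) - ((i:ℤ)+1) ≤ ((n:ℤ)+1) - 2*(j:ℤ) := by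
    have : 4*(j:ℤ) ≤ (n:ℤ) + (i:ℤ) + 2 := by exact_mod_cast h4
    linarith
  have ineq1 : ((i:ℤ)+1) * ( (2*(j:ℤ) - ((i:ℤ)+1)) * ((n+1).choose j : ℤ) )
      ≤ ((i:ℤ)+1) * ( (((n:ℤ)+1) - 2*j) * ((n+1).choose j : ℤ) ) := by
    apply mul_le_mul_of_nonneg_left _ (by positivity)
    exact mul_le_mul_of_nonneg_right hba hB
  have ineq2 : (0:ℤ) ≤ (2*(j:ℤ) - ((i:ℤ)+1)) *
      ( ((i:ℤ)+1) * ((n+1).choose j : ℤ) - ((n:ℤ)+1) * ((i+1).choose j : ℤ) ) :=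
    mul_nonneg (by linarith) step3
  have big : (0:ℤ) ≤ (((i:ℤ)+1) * ((n:ℤ)+1)) *
      ( ((n.choose j : ℤ) - n.choose (j-1)) + ((i.choose j : ℤ) - i.choose (j-1)) ) := by
    rw [e]; nlinarith [ineq1, ineq2]
  exact (mul_nonneg_iff_of_pos_left (by positivity : (0:ℤ) < ((i:ℤ)+1) * ((n:ℤ)+1))).mp big

theorem stmt19 (d : ℕ) (hd : 3 ≤ d) (h : ℕ → ℕ) (h0 : h 0 = 1) (h1 : 1 ≤ h 1)
    (hsym : ∀ i, i ≤ d / 2 → h (d - i) ≤ h i)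
    (f : ℕ → ℕ)
    (hf : ∀ k, f k = ∑ i ∈ Finset.range (d + 1), h i * Nat.choose (d - i) (d - 1 - k)) :
    (∀ k, k + 1 ≤ (d - 1) / 2 → f k < f (k + 1)) ∧
    (∀ k, 3 * (d - 1) / 4 ≤ k → k + 1 ≤ d - 1 → f (k + 1) ≤ f k) := by
  constructor
  · -- increasing part
    intro k hk
    have h2k : 2*(k+1) ≤ d-1 := by omega
    rw [hf, hf]
    apply Finset.sum_lt_sum
    · intro i hi
      apply Nat.mul_le_mul_left
      have e : d - 1 - k = (d - 1 - (k+1)) + 1 := by omega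
      rw [e]
      exact cmir1 (by omega)
    · refine ⟨1, Finset.mem_range.mpr (by omega), ?_⟩
      have e : d - 1 - k = (d - 1 - (k+1)) + 1 := by omega
      rw [e]
      have hlt : (d-1).choose ((d - 1 - (k+1)) + 1) < (d-1).choose (d - 1 - (k+1)) :=
        cmir2 (by omega) (by omega)
      exact mul_lt_mul_of_pos_left hlt (by omega)
  · -- decreasing part
    intro k hk1 hk2
    set jj := d - 1 - k with hjj
    have hj1 : 1 ≤ jj := by omega
    have hj4 : 4 * jj ≤ d + 2 := by omega
    have e1 : d - 1 - (k+1) = jj - 1 := by omega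
    rw [hf, hf, e1]
    have key : ∀ i, i ≤ d → 2*i ≤ d →
        0 ≤ (h i : ℤ) * (((d-i).choose jj : ℤ) - (d-i).choose (jj-1))
            + (h (d-i) : ℤ) * ((i.choose jj : ℤ) - (i.choose (jj-1) : ℤ)) := by
      intro i hid h2i
      have hin : i ≤ d - i := by omega
      rcases le_or_gt (2*jj) (i+1) with hc | hc
      · -- both differences nonneg
        have d1 : (i.choose (jj-1) : ℤ) ≤ (i.choose jj : ℤ) := by
          have := cmono1 (n := i) (r := jj - 1) (by omega)
          rw [show jj - 1 + 1 = jj from by omega] at this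
          exact_mod_cast this
        have d2 : ((d-i).choose (jj-1) : ℤ) ≤ ((d-i).choose jj : ℤ) := by
          have := cmono1 (n := d - i) (r := jj - 1) (by omega)
          rw [show jj - 1 + 1 = jj from by omega] at this
          exact_mod_cast this
        have n1 : (0:ℤ) ≤ (h i : ℤ) := by positivity
        have n2 : (0:ℤ) ≤ (h (d-i) : ℤ) := by positivity
        nlinarith
      · -- i + 2 ≤ 2*jj
        have hDi : (i.choose jj : ℤ) - (i.choose (jj-1) : ℤ) ≤ 0 := by
          have hle := cmir1 (n := i) (j := jj - 1) (by omega)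
          rw [show jj - 1 + 1 = jj from by omega] at hle
          have : (i.choose jj : ℤ) ≤ (i.choose (jj-1) : ℤ) := by exact_mod_cast hle
          linarith
        have hsym' : (h (d-i) : ℤ) ≤ (h i : ℤ) := by
          exact_mod_cast hsym i (by omega)
        have hDD := keyD (d-i) i jj hin hj1 (by omega) (by omega)
        nlinarith [mul_le_mul_of_nonpos_right hsym' hDi,
          mul_nonneg (show (0:ℤ) ≤ (h i : ℤ) by positivity) hDD]
    have pair : ∀ i, i ≤ d →
        0 ≤ (h i : ℤ) * (((d-i).choose jj : ℤ) - (d-i).choose (jj-1))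
            + (h (d-i) : ℤ) * (((d-(d-i)).choose jj : ℤ) - ((d-(d-i)).choose (jj-1) : ℤ)) := by
      intro i hid
      rw [show d - (d - i) = i from by omega]
      rcases le_or_gt (2*i) d with hc | hc
      · exact key i hid hc
      · have hk := key (d-i) (by omega) (by omega)
        rw [show d - (d - i) = i from by omega] at hk
        linarith
    set G : ℕ → ℤ := fun i => (h i : ℤ) * (((d-i).choose jj : ℤ) - (d-i).choose (jj-1)) with hG
    have hrefl : ∑ i ∈ range (d+1), G (d - i) = ∑ i ∈ range (d+1), G i := by
      have := Finset.sum_range_reflect G (d+1)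
      simpa using this
    have two : 2 * (∑ i ∈ range (d+1), G i) = ∑ i ∈ range (d+1), (G i + G (d-i)) := by
      rw [Finset.sum_add_distrib, hrefl]; ring
    have pos : 0 ≤ ∑ i ∈ range (d+1), (G i + G (d-i)) := by
      apply Finset.sum_nonneg
      intro i hi
      have hid : i ≤ d := Nat.lt_succ_iff.mp (Finset.mem_range.mp hi)
      have hp := pair i hid
      simp only [hG]
      linarith [hp]
    have hsum : 0 ≤ ∑ i ∈ range (d+1), G i := by linarith
    have expand : ∑ i ∈ range (d+1), G i =
        (∑ i ∈ range (d+1), (h i : ℤ) * ((d-i).choose jj : ℤ))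
        - ∑ i ∈ range (d+1), (h i : ℤ) * ((d-i).choose (jj-1) : ℤ) := by
      rw [← Finset.sum_sub_distrib]
      exact Finset.sum_congr rfl (fun i _ => by simp only [hG]; ring)
    have H : ((∑ i ∈ range (d+1), h i * (d-i).choose (jj-1) : ℕ) : ℤ)
        ≤ ((∑ i ∈ range (d+1), h i * (d-i).choose jj : ℕ) : ℤ) := by
      push_cast
      linarith
    exact_mod_cast H
end
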